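/- L(n) is a graded lattice of rank 2^n − n − 2: every maximal chain in L(n) has length 2^n − n − 2. -/

import Mathlib

/-- The collections of subsets of `{1,...,n}` containing `∅`, the full set and all
singletons, and closed under intersection. -/
def LnSet (n : ℕ) : Set (Set (Finset (Fin n))) :=
  {S | ∅ ∈ S ∧ Finset.univ ∈ S ∧ (∀ i : Fin n, ({i} : Finset (Fin n)) ∈ S) ∧
    ∀ a ∈ S, ∀ b ∈ S, a ∩ b ∈ S}

namespace StmtAux

variable {n : ℕ}

/-- The bottom element of `L(n)`. -/
def botL (n : ℕ) : Set (Finset (Fin n)) :=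
  insert ∅ (insert Finset.univ (Set.range fun i : Fin n => ({i} : Finset (Fin n))))

lemma univ_mem_LnSet : (Set.univ : Set (Finset (Fin n))) ∈ LnSet n :=
  ⟨trivial, trivial, fun _ => trivial, fun _ _ _ _ => trivial⟩

lemma botL_mem : botL n ∈ LnSet n := by
  refine ⟨Or.inl rfl, Or.inr (Or.inl rfl), fun i => Or.inr (Or.inr ⟨i, rfl⟩), ?_⟩
  intro a ha b hb
  simp only [botL, Set.mem_insert_iff, Set.mem_range] at ha hb ⊢
  rcases ha with rfl | rfl | ⟨i, rfl⟩
  · left; simp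
  · rcases hb with rfl | rfl | ⟨j, rfl⟩
    · left; simp
    · right; left; simp
    · right; right; exact ⟨j, by simp⟩
  · rcases hb with rfl | rfl | ⟨j, rfl⟩
    · left; simp
    · right; right; exact ⟨i, by simp⟩
    · by_cases h : i = j
      · subst h; right; right; exact ⟨i, by simp⟩
      · left
        rw [Finset.singleton_inter_of_notMem (by simpa using h)]

lemma botL_subset {S : Set (Finset (Fin n))} (hS : S ∈ LnSet n) : botL n ⊆ S := by
  intro x hx
  simp only [botL, Set.mem_insert_iff, Set.mem_range] at hx
  rcases hx with rfl | rfl | ⟨i, rfl⟩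
  · exact hS.1
  · exact hS.2.1
  · exact hS.2.2.1 i

lemma exists_cover {A B : Set (Finset (Fin n))} (hA : A ∈ LnSet n) (hB : B ∈ LnSet n)
    (hAB : A ⊆ B) (hBA : ¬ B ⊆ A) :
    ∃ C ∈ LnSet n, A ⊂ C ∧ C ⊆ B ∧ C.ncard = A.ncard + 1 := by
  have hne : (B \ A).Nonempty := by
    rcases Set.not_subset.mp hBA with ⟨x, hxB, hxA⟩; exact ⟨x, hxB, hxA⟩
  obtain ⟨x, hx, hmin0⟩ := Set.Finite.exists_minimalFor Finset.card (B \ A) (Set.toFinite _) hne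
  have hmin : ∀ a' ∈ B \ A, a'.card ≤ x.card → x.card = a'.card :=
    fun a' ha' h => le_antisymm (hmin0 ha' h) h
  have key : ∀ a ∈ A, x ∩ a ∈ insert x A := by
    intro a ha
    have hmem : x ∩ a ∈ B := hB.2.2.2 x hx.1 a (hAB ha)
    by_cases h : x ∩ a ∈ A
    · exact Set.mem_insert_of_mem _ h
    · have hxa : x ∩ a ∈ B \ A := ⟨hmem, h⟩
      have hcard : (x ∩ a).card = x.card :=
        (hmin _ hxa (Finset.card_le_card Finset.inter_subset_left)).symm
      have : x ∩ a = x :=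
        Finset.eq_of_subset_of_card_le Finset.inter_subset_left hcard.ge
      rw [this]; exact Set.mem_insert _ _
  refine ⟨insert x A, ⟨Set.mem_insert_of_mem _ hA.1, Set.mem_insert_of_mem _ hA.2.1,
      fun i => Set.mem_insert_of_mem _ (hA.2.2.1 i), ?_⟩,
      Set.ssubset_insert hx.2, Set.insert_subset hx.1 hAB,
      Set.ncard_insert_of_notMem hx.2 (Set.toFinite _)⟩
  intro a ha b hb
  rcases ha with rfl | ha
  · rcases hb with rfl | hb
    · rw [Finset.inter_self]; exact Set.mem_insert _ _
    · exact key b hb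
  · rcases hb with rfl | hb
    · rw [Finset.inter_comm]; exact key a ha
    · exact Set.mem_insert_of_mem _ (hA.2.2.2 a ha b hb)

lemma two_pow_lower (hn : 2 ≤ n) : n + 2 ≤ 2 ^ n := by
  induction n with
  | zero => omega
  | succ k ih =>
    rcases Nat.lt_or_ge k 2 with h | h
    · interval_cases k <;> omega
    · have := ih h
      have : 2 ^ k ≤ 2 ^ (k + 1) := Nat.pow_le_pow_right (by norm_num) (by omega)
      omega

lemma botL_ncard (hn : 2 ≤ n) : (botL n).ncard = n + 2 := by
  have hinj : Function.Injective (fun i : Fin n => ({i} : Finset (Fin n))) :=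
    fun i j h => Finset.singleton_injective h
  have h1 : (Set.range fun i : Fin n => ({i} : Finset (Fin n))).ncard = n := by
    rw [show (Set.range fun i : Fin n => ({i} : Finset (Fin n)))
        = ↑(Finset.univ.image fun i : Fin n => ({i} : Finset (Fin n))) by simp,
      Set.ncard_coe_finset, Finset.card_image_of_injective _ hinj,
      Finset.card_univ, Fintype.card_fin]
  have h2 : (Finset.univ : Finset (Fin n)) ∉
      Set.range (fun i : Fin n => ({i} : Finset (Fin n))) := by
    rintro ⟨i, hi⟩
    have := congrArg Finset.card hi
    simp only [Finset.card_singleton, Finset.card_univ, Fintype.card_fin] at this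
    omega
  have h3 : (∅ : Finset (Fin n)) ∉ insert (Finset.univ : Finset (Fin n))
      (Set.range (fun i : Fin n => ({i} : Finset (Fin n)))) := by
    simp only [Set.mem_insert_iff, Set.mem_range, not_or, not_exists]
    constructor
    · intro h
      have : (0 : ℕ) = n := by
        have := congrArg Finset.card h
        simpa using this
      omega
    · intro i h
      exact (Finset.singleton_ne_empty i) h
  rw [botL, Set.ncard_insert_of_notMem h3 (Set.toFinite _),
    Set.ncard_insert_of_notMem h2 (Set.toFinite _), h1]

lemma botL_ncard_zero : (botL 0).ncard = 1 := by
  have : botL 0 = {∅} := by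
    rw [botL]
    have h1 : (Finset.univ : Finset (Fin 0)) = ∅ := rfl
    have h2 : (Set.range fun i : Fin 0 => ({i} : Finset (Fin 0))) = ∅ :=
      Set.range_eq_empty _
    rw [h1, h2]
    simp
  rw [this, Set.ncard_singleton]

lemma botL_ncard_one : (botL 1).ncard = 2 := by
  have : botL 1 = {∅, {0}} := by
    rw [botL]
    have h1 : (Finset.univ : Finset (Fin 1)) = {0} := rfl
    have h2 : (Set.range fun i : Fin 1 => ({i} : Finset (Fin 1))) = {({0} : Finset (Fin 1))} := by
      ext s
      simp only [Set.mem_range, Set.mem_singleton_iff]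
      constructor
      · rintro ⟨i, rfl⟩; rw [Fin.eq_zero i]
      · rintro rfl; exact ⟨0, rfl⟩
    rw [h1, h2]
    simp
  rw [this, Set.ncard_pair (Finset.singleton_ne_empty 0).symm]

end StmtAux

open StmtAux in
/-- `L(n)` is graded of rank `2^n - n - 2`: every maximal chain has length
`2^n - n - 2`, i.e. consists of `(2^n - n - 2) + 1` elements. -/
theorem stmt_10 (n : ℕ) (c : Set (LnSet n)) (hc : IsMaxChain (· ≤ ·) c) :
    c.ncard = (2 ^ n - n - 2) + 1 := by
  classical
  set m : LnSet n := ⟨botL n, botL_mem⟩ with hm_def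
  set t : LnSet n := ⟨Set.univ, univ_mem_LnSet⟩ with ht_def
  have hle_m : ∀ S : LnSet n, m ≤ S := fun S => botL_subset S.2
  have hle_t : ∀ S : LnSet n, S ≤ t := fun S => Set.subset_univ _
  have hmc : m ∈ c := by
    have h1 : IsChain (· ≤ ·) (insert m c) :=
      hc.1.insert fun b _ _ => Or.inl (hle_m b)
    have h2 := hc.2 h1 (Set.subset_insert _ _)
    rw [h2]; exact Set.mem_insert _ _
  have htc : t ∈ c := by
    have h1 : IsChain (· ≤ ·) (insert t c) :=
      hc.1.insert fun b _ _ => Or.inr (hle_t b)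
    have h2 := hc.2 h1 (Set.subset_insert _ _)
    rw [h2]; exact Set.mem_insert _ _
  set f : LnSet n → ℕ := fun S => (S : Set (Finset (Fin n))).ncard with hf_def
  have hmono : ∀ {S T : LnSet n}, S ≤ T → f S ≤ f T :=
    fun h => Set.ncard_le_ncard h (Set.toFinite _)
  have hstrict : ∀ {S T : LnSet n}, S < T → f S < f T := by
    intro S T h
    exact Set.ncard_lt_ncard (Subtype.coe_lt_coe.mpr h) (Set.toFinite _)
  have htop : f t = 2 ^ n := by
    show (Set.univ : Set (Finset (Fin n))).ncard = 2 ^ n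
    rw [Set.ncard_univ, Nat.card_eq_fintype_card, Fintype.card_finset, Fintype.card_fin]
  -- saturation
  have hsat : ∀ A ∈ c, ∀ B ∈ c, A < B → (∀ X ∈ c, ¬ (A < X ∧ X < B)) →
      f B = f A + 1 := by
    intro A hAc B hBc hAB hbetween
    have hAB' : (A : Set (Finset (Fin n))) < (B : Set (Finset (Fin n))) :=
      Subtype.coe_lt_coe.mpr hAB
    obtain ⟨C, hCmem, hAC, hCB, hcard⟩ :=
      exists_cover A.2 B.2 hAB'.le (lt_iff_le_not_ge.mp hAB').2
    set C' : LnSet n := ⟨C, hCmem⟩ with hC'_def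
    have hAC' : A < C' := Subtype.coe_lt_coe.mp hAC
    have hC'B : C' ≤ B := hCB
    have hchain : IsChain (· ≤ ·) (insert C' c) := by
      refine hc.1.insert ?_
      intro X hX _
      rcases eq_or_ne X A with rfl | hXA
      · exact Or.inr hAC'.le
      rcases eq_or_ne X B with rfl | hXB
      · exact Or.inl hC'B
      rcases hc.1 hX hAc hXA with h | h
      · exact Or.inr (h.trans hAC'.le)
      · rcases hc.1 hX hBc hXB with h' | h'
        · exact absurd ⟨lt_of_le_of_ne h (Ne.symm hXA), lt_of_le_of_ne h' hXB⟩
            (hbetween X hX)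
        · exact Or.inl (hC'B.trans h')
    have hC'c : C' ∈ c := by
      have h2 := hc.2 hchain (Set.subset_insert _ _)
      rw [h2]; exact Set.mem_insert _ _
    have hC'B' : C' = B := by
      rcases lt_or_eq_of_le hC'B with h | h
      · exact absurd ⟨hAC', h⟩ (hbetween C' hC'c)
      · exact h
    rw [← hC'B']
    exact hcard
  -- injectivity of f on c
  have hinj : Set.InjOn f c := by
    intro S hS T hT h
    by_contra hne
    rcases hc.1 hS hT hne with hST | hTS
    · exact absurd h (Nat.ne_of_lt (hstrict (lt_of_le_of_ne hST hne)))
    · exact absurd h.symm (Nat.ne_of_lt (hstrict (lt_of_le_of_ne hTS (Ne.symm hne))))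
  -- image of f
  have himg : f '' c = Set.Icc (f m) (2 ^ n) := by
    apply Set.Subset.antisymm
    · rintro k ⟨S, hS, rfl⟩
      exact ⟨hmono (hle_m S), htop ▸ hmono (hle_t S)⟩
    · rintro k ⟨hk1, hk2⟩
      by_contra hk
      have hk' : ∀ S ∈ c, f S ≠ k := fun S hS h => hk ⟨S, hS, h⟩
      set T : Set (LnSet n) := {S | S ∈ c ∧ f S ≤ k} with hT_def
      have hTne : T.Nonempty := ⟨m, hmc, hk1⟩
      obtain ⟨A, hA, hAmax0⟩ := Set.Finite.exists_maximalFor f T (Set.toFinite _) hTne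
      have hAmax : ∀ S ∈ T, f A ≤ f S → f A = f S :=
        fun S hS h => le_antisymm h (hAmax0 hS h)
      have hAgr : ∀ S ∈ T, S ≤ A := by
        intro S hS
        rcases eq_or_ne S A with rfl | hne
        · exact le_refl _
        rcases hc.1 hS.1 hA.1 hne with h | h
        · exact h
        · have heq := hAmax S hS (hmono h)
          have heq2 : (A : Set (Finset (Fin n))) = S :=
            Set.eq_of_subset_of_ncard_le h heq.ge (Set.toFinite _)
          exact (Subtype.coe_injective heq2).ge
      have hAk : f A < k := lt_of_le_of_ne hA.2 (hk' A hA.1)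
      have hAt : A < t := by
        refine lt_of_le_of_ne (hle_t A) ?_
        intro h
        rw [h, htop] at hAk
        omega
      set U : Set (LnSet n) := {S | S ∈ c ∧ A < S} with hU_def
      have hUne : U.Nonempty := ⟨t, htc, hAt⟩
      obtain ⟨B, hB, hBmin0⟩ := Set.Finite.exists_minimalFor f U (Set.toFinite _) hUne
      have hBmin : ∀ S ∈ U, f S ≤ f B → f B = f S :=
        fun S hS h => le_antisymm (hBmin0 hS h) h
      have hBle : ∀ S ∈ U, B ≤ S := by
        intro S hS
        rcases eq_or_ne B S with rfl | hne
        · exact le_refl _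
        rcases hc.1 hB.1 hS.1 hne with h | h
        · exact h
        · have heq := hBmin S hS (hmono h)
          have heq2 : (S : Set (Finset (Fin n))) = B :=
            Set.eq_of_subset_of_ncard_le h heq.le (Set.toFinite _)
          exact (Subtype.coe_injective heq2).ge
      have hnobetween : ∀ X ∈ c, ¬ (A < X ∧ X < B) := by
        rintro X hX ⟨h1, h2⟩
        exact absurd (hBle X ⟨hX, h1⟩) (not_le_of_gt h2)
      have hBA := hsat A hA.1 B hB.1 hB.2 hnobetween
      have hBT : B ∈ T := ⟨hB.1, by omega⟩
      exact absurd (hAgr B hBT) (not_le_of_gt hB.2)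
  have hcount := Set.ncard_image_of_injOn hinj
  rw [himg, ← Finset.coe_Icc, Set.ncard_coe_finset, Nat.card_Icc] at hcount
  rw [← hcount]
  have hfm : f m = (botL n).ncard := rfl
  rw [hfm]
  match n with
  | 0 => rw [botL_ncard_zero]; norm_num
  | 1 => rw [botL_ncard_one]; norm_num
  | (k + 2) =>
    rw [botL_ncard (by omega)]
    have := two_pow_lower (n := k + 2) (by omega)
    omega
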